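/- Let a̲ ∈ [0,1), A = [a̲,1], and let u : A → ℝ be twice continuously differentiable with u' > 0 and u'' < 0 on A. Define φ : ℝ → [a̲,1] by φ(x) = 1 if x ≤ u'(1), φ(x) = (u')^{-1}(x) if u'(1) < x < u'(a̲), and φ(x) = a̲ if x ≥ u'(a̲). Let r > 0, Δ > 0, σ ∈ (0,1], β > 0, μ ∈ [0,1], let a_I, a_U ∈ A and I_k, I_u ≥ 0, and set p = βΔ·(a_I·I_k + a_U·I_u) and I = I_k + I_u. Let V_{I_k} < 0 and E be real numbers with 0 < E ≤ −V_{I_k} (corresponding to E = E_z e^{−νΔ}V_U(z') − V_{I_k} with V_U ≤ 0). Define Ī = −((e^{rΔ} − 1)/Δ)·u'(1)/(σ·β·V_{I_k}) > 0. Then whenever I < Ī, the best response a* = φ(σ·μ·p·E/(e^{rΔ} − 1)) equals 1. -/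

import Mathlib

/-- Full activity with sufficiently low prevalence: if the prevalence
`I = I_k + I_u` is below the threshold `Ī = -((e^{rΔ}-1)/Δ)·u'(1)/(σβV_{I_k})`,
then the best response `a* = φ(σμpE/(e^{rΔ}-1))` equals `1`. -/
theorem stmt_8 (a0 : ℝ) (ha0 : a0 ∈ Set.Ico (0:ℝ) 1)
    (u u' u'' : ℝ → ℝ)
    (hderiv : ∀ x ∈ Set.Icc a0 1, HasDerivWithinAt u (u' x) (Set.Icc a0 1) x)
    (hderiv2 : ∀ x ∈ Set.Icc a0 1, HasDerivWithinAt u' (u'' x) (Set.Icc a0 1) x)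
    (hu''cont : ContinuousOn u'' (Set.Icc a0 1))
    (hu'pos : ∀ x ∈ Set.Icc a0 1, 0 < u' x)
    (hu''neg : ∀ x ∈ Set.Icc a0 1, u'' x < 0)
    (φ : ℝ → ℝ)
    (hφ1 : ∀ x : ℝ, x ≤ u' 1 → φ x = 1)
    (hφ2 : ∀ x : ℝ, u' 1 < x → x < u' a0 → φ x ∈ Set.Ioo a0 1 ∧ u' (φ x) = x)
    (hφ3 : ∀ x : ℝ, u' a0 ≤ x → φ x = a0)
    (r Δ σ β μ : ℝ) (hr : 0 < r) (hΔ : 0 < Δ) (hσ : σ ∈ Set.Ioc (0:ℝ) 1)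
    (hβ : 0 < β) (hμ : μ ∈ Set.Icc (0:ℝ) 1)
    (aI aU : ℝ) (haI : aI ∈ Set.Icc a0 1) (haU : aU ∈ Set.Icc a0 1)
    (Ik Iu : ℝ) (hIk : 0 ≤ Ik) (hIu : 0 ≤ Iu)
    (VIk E : ℝ) (hVIk : VIk < 0) (hE : 0 < E) (hEle : E ≤ -VIk)
    (hI : Ik + Iu < -((Real.exp (r*Δ) - 1) / Δ) * u' 1 / (σ * β * VIk)) :
    φ (σ * μ * (β * Δ * (aI * Ik + aU * Iu)) * E / (Real.exp (r*Δ) - 1)) = 1 := by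
  obtain ⟨hσ0, hσ1⟩ := hσ
  obtain ⟨hμ0, hμ1⟩ := hμ
  have hu1 : 0 < u' 1 := hu'pos 1 ⟨le_of_lt ha0.2, le_refl 1⟩
  have hD : (0:ℝ) < Real.exp (r*Δ) - 1 := by
    have : (1:ℝ) < Real.exp (r*Δ) := by
      rw [← Real.exp_zero]
      exact Real.exp_lt_exp.mpr (by positivity)
    linarith
  have hc : σ * β * VIk < 0 := by
    have := mul_pos hσ0 hβ
    exact mul_neg_of_pos_of_neg this hVIk
  have hI' : -((Real.exp (r*Δ) - 1) / Δ) * u' 1 < (Ik + Iu) * (σ * β * VIk) :=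
    (lt_div_iff_of_neg hc).mp hI
  have key : σ * β * Δ * (Ik + Iu) * (-VIk) < (Real.exp (r*Δ) - 1) * u' 1 := by
    have h1 : (-((Real.exp (r*Δ) - 1) / Δ) * u' 1) * Δ < ((Ik + Iu) * (σ * β * VIk)) * Δ :=
      mul_lt_mul_of_pos_right hI' hΔ
    have h2 : -((Real.exp (r*Δ) - 1) / Δ) * u' 1 * Δ = -((Real.exp (r*Δ) - 1) * u' 1) := by
      field_simp
    nlinarith [h1, h2]
  apply hφ1
  rw [div_le_iff₀ hD]
  have h0a : 0 ≤ a0 := ha0.1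
  have haI1 : aI ≤ 1 := haI.2
  have haU1 : aU ≤ 1 := haU.2
  have haI0 : 0 ≤ aI := le_trans h0a haI.1
  have haU0 : 0 ≤ aU := le_trans h0a haU.1
  have hsum : aI * Ik + aU * Iu ≤ Ik + Iu := by nlinarith
  have hbound : σ * μ * (β * Δ * (aI * Ik + aU * Iu)) * E ≤ σ * β * Δ * (Ik + Iu) * (-VIk) := by
    have hsumpos : 0 ≤ aI * Ik + aU * Iu := by positivity
    have hIpos : 0 ≤ Ik + Iu := by linarith
    have hnV : 0 < -VIk := by linarith
    calc σ * μ * (β * Δ * (aI * Ik + aU * Iu)) * E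
        ≤ σ * 1 * (β * Δ * (aI * Ik + aU * Iu)) * E := by
          have hpos : 0 ≤ σ * (β * Δ * (aI * Ik + aU * Iu)) * E := by positivity
          nlinarith [hpos]
      _ = σ * (β * Δ) * (aI * Ik + aU * Iu) * E := by ring
      _ ≤ σ * (β * Δ) * (Ik + Iu) * (-VIk) := by
          apply mul_le_mul
          · apply mul_le_mul_of_nonneg_left hsum; positivity
          · exact hEle
          · linarith
          · positivity
      _ = σ * β * Δ * (Ik + Iu) * (-VIk) := by ring
  linarith
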